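/- For every ε > 0 and ℓ > 0 there exists a constant C = C(ε,ℓ) > 0 such that for all α ∈ [0, 2-ε] and all u with u(ℓ)=0 and ∫₀^ℓ x^α|u'|² dx < ∞, one has ∫₀^ℓ |u|² dx ≤ C ∫₀^ℓ x^α |u'|² dx. -/

import Mathlib

open MeasureTheory Set

set_option maxHeartbeats 1000000 in
/-- Uniform (in `α`) weighted Poincaré inequality:
for every `ε > 0` and `ℓ > 0` there is `C = C(ε,ℓ) > 0` such that for all
`α ∈ [0, 2-ε]` and all admissible `u` with `u ℓ = 0`,
`∫₀^ℓ u² ≤ C ∫₀^ℓ x^α (u')²`. -/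
theorem weighted_poincare_uniform
    (ε ℓ : ℝ) (hε : 0 < ε) (hℓ : 0 < ℓ) :
    ∃ C : ℝ, 0 < C ∧
      ∀ α : ℝ, α ∈ Set.Icc (0:ℝ) (2 - ε) →
        ∀ u : ℝ → ℝ,
          (∀ x ∈ Set.Ioc (0:ℝ) ℓ, DifferentiableAt ℝ u x) →
          u ℓ = 0 →
          MeasureTheory.IntegrableOn (fun x => (u x)^2) (Set.Ioo 0 ℓ) →
          MeasureTheory.IntegrableOn (fun x => x ^ α * (deriv u x)^2) (Set.Ioo 0 ℓ) →
          ∫ x in Set.Ioo (0:ℝ) ℓ, (u x)^2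
            ≤ C * ∫ x in Set.Ioo (0:ℝ) ℓ, x ^ α * (deriv u x)^2 := by
  set ε' : ℝ := min ε (1/2) with hε'def
  have hε'0 : 0 < ε' := lt_min hε (by norm_num)
  have hε'le : ε' ≤ 1/2 := min_le_right _ _
  refine ⟨2 * ℓ ^ ε' / ε' + ℓ ^ 2, by positivity, ?_⟩
  rintro α ⟨hα0, hα2'⟩ u hdiff huℓ hu2 hW
  have hα2 : α ≤ 2 - ε' := hα2'.trans (by have := min_le_left ε (1/2); linarith)
  set I : ℝ := ∫ x in Set.Ioo (0:ℝ) ℓ, x ^ α * (deriv u x)^2 with hIdef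
  have hI0 : 0 ≤ I := by
    refine setIntegral_nonneg measurableSet_Ioo fun x hx => ?_
    exact mul_nonneg (Real.rpow_nonneg hx.1.le α) (sq_nonneg _)
  -- pointwise bound
  have key : ∀ x ∈ Set.Ioo (0:ℝ) ℓ, (u x)^2 ≤ (2 * x ^ (ε'-1) + ℓ) * I := by
    rintro x ⟨hx0, hxℓ⟩
    set A : ℝ := 2 * x ^ (ε'-1) + ℓ with hAdef
    have hA : 0 < A := by positivity
    have hmeas : Measurable (deriv u) := measurable_deriv u
    -- integrability of the weighted derivative on Ioc x ℓ
    have hWx : IntegrableOn (fun t => t ^ α * (deriv u t)^2) (Set.Ioc x ℓ) := by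
      rw [integrableOn_Ioc_iff_integrableOn_Ioo]
      exact hW.mono_set (Set.Ioo_subset_Ioo hx0.le le_rfl)
    -- the derivative is interval integrable on [x, ℓ]
    have hD : IntervalIntegrable (deriv u) volume x ℓ := by
      rw [intervalIntegrable_iff_integrableOn_Ioc_of_le hxℓ.le]
      refine Integrable.mono'
        ((integrable_const 1).add (hWx.const_mul (x ^ (-α)))) hmeas.aestronglyMeasurable.restrict ?_
      refine (ae_restrict_iff' measurableSet_Ioc).2 (MeasureTheory.ae_of_all _ fun t ht => ?_)
      have ht0 : 0 < t := hx0.trans ht.1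
      have h1 : (1:ℝ) ≤ x ^ (-α) * t ^ α := by
        have hxa : x ^ α ≤ t ^ α := Real.rpow_le_rpow hx0.le ht.1.le hα0
        have hxpos : (0:ℝ) < x ^ α := Real.rpow_pos_of_pos hx0 α
        rw [Real.rpow_neg hx0.le]
        rw [show (1:ℝ) = (x ^ α)⁻¹ * x ^ α by field_simp]
        exact mul_le_mul_of_nonneg_left hxa (by positivity)
      have h2 : |deriv u t| ≤ 1 + (deriv u t)^2 := by
        nlinarith [sq_nonneg (|deriv u t| - 1), sq_abs (deriv u t), abs_nonneg (deriv u t)]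
      have h3 : (deriv u t)^2 ≤ x ^ (-α) * (t ^ α * (deriv u t)^2) := by
        calc (deriv u t)^2 = 1 * (deriv u t)^2 := (one_mul _).symm
          _ ≤ (x ^ (-α) * t ^ α) * (deriv u t)^2 :=
              mul_le_mul_of_nonneg_right h1 (sq_nonneg _)
          _ = x ^ (-α) * (t ^ α * (deriv u t)^2) := by ring
      calc ‖deriv u t‖ = |deriv u t| := rfl
        _ ≤ 1 + (deriv u t)^2 := h2
        _ ≤ 1 + x ^ (-α) * (t ^ α * (deriv u t)^2) := by linarith
    -- fundamental theorem of calculus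
    have hft : ∫ t in x..ℓ, deriv u t = u ℓ - u x := by
      refine intervalIntegral.integral_deriv_eq_sub (fun t ht => ?_) hD
      rw [Set.uIcc_of_le hxℓ.le] at ht
      exact hdiff t ⟨hx0.trans_le ht.1, ht.2⟩
    set J : ℝ := ∫ t in x..ℓ, |deriv u t| with hJdef
    have hJ0 : 0 ≤ J := by
      rw [hJdef, intervalIntegral.integral_of_le hxℓ.le]
      exact setIntegral_nonneg measurableSet_Ioc fun t _ => abs_nonneg _
    have huJ : |u x| ≤ J := by
      have := intervalIntegral.abs_integral_le_integral_abs (μ := volume) hxℓ.le (f := deriv u)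
      rw [hft, huℓ, zero_sub, abs_neg] at this
      exact this
    -- integrability of t ^ (-α) and t ^ (ε'-2) on [x, ℓ]
    have h0mem : (0:ℝ) ∉ Set.uIcc x ℓ := by
      rw [Set.uIcc_of_le hxℓ.le]
      exact fun h => absurd h.1 (by linarith)
    have hR1 : IntervalIntegrable (fun t : ℝ => t ^ (-α)) volume x ℓ :=
      intervalIntegral.intervalIntegrable_rpow (Or.inr h0mem)
    have hR2 : IntervalIntegrable (fun t : ℝ => t ^ (ε'-2)) volume x ℓ :=
      intervalIntegral.intervalIntegrable_rpow (Or.inr h0mem)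
    -- bound on K1 = ∫ t^(-α)
    have hK1 : (∫ t in x..ℓ, t ^ (-α)) ≤ A := by
      have hptw : ∀ t ∈ Set.Ioc x ℓ, t ^ (-α) ≤ t ^ (ε'-2) + 1 := by
        intro t ht
        have ht0 : 0 < t := hx0.trans ht.1
        rcases le_or_gt t 1 with h | h
        · have : t ^ (-α) ≤ t ^ (ε'-2) :=
            Real.rpow_le_rpow_of_exponent_ge ht0 h (by linarith)
          have h1 : (0:ℝ) ≤ (1:ℝ) := zero_le_one
          linarith
        · have h1 : t ^ (-α) ≤ 1 :=
            Real.rpow_le_one_of_one_le_of_nonpos h.le (by linarith)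
          have h2 : (0:ℝ) ≤ t ^ (ε'-2) := Real.rpow_nonneg ht0.le _
          linarith
      have hmono : (∫ t in x..ℓ, t ^ (-α)) ≤ ∫ t in x..ℓ, (t ^ (ε'-2) + 1) := by
        rw [intervalIntegral.integral_of_le hxℓ.le, intervalIntegral.integral_of_le hxℓ.le]
        refine setIntegral_mono_on ?_ ?_ measurableSet_Ioc hptw
        · exact (intervalIntegrable_iff_integrableOn_Ioc_of_le hxℓ.le).1 hR1
        · exact ((intervalIntegrable_iff_integrableOn_Ioc_of_le hxℓ.le).1 hR2).add
            (integrable_const 1)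
      have hval : ∫ t in x..ℓ, (t ^ (ε'-2) + 1)
          = (ℓ ^ (ε'-1) - x ^ (ε'-1)) / (ε'-1) + (ℓ - x) := by
        rw [intervalIntegral.integral_add hR2 intervalIntegrable_const,
          integral_rpow (Or.inr ⟨by norm_num; linarith, h0mem⟩)]
        norm_num [show ε' - 2 + 1 = ε' - 1 by ring]
      have hbound : (ℓ ^ (ε'-1) - x ^ (ε'-1)) / (ε'-1) ≤ 2 * x ^ (ε'-1) := by
        rw [div_le_iff_of_neg (by linarith)]
        have hX : (0:ℝ) ≤ x ^ (ε'-1) := Real.rpow_nonneg hx0.le _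
        have hL : (0:ℝ) ≤ ℓ ^ (ε'-1) := Real.rpow_nonneg hℓ.le _
        nlinarith [mul_nonneg hX (by linarith : (0:ℝ) ≤ 1 - 2*ε')]
      calc (∫ t in x..ℓ, t ^ (-α)) ≤ (ℓ ^ (ε'-1) - x ^ (ε'-1)) / (ε'-1) + (ℓ - x) := by
            rw [← hval]; exact hmono
        _ ≤ 2 * x ^ (ε'-1) + ℓ := by linarith
    -- bound on K2 = ∫ t^α (u')²
    have hK2 : (∫ t in x..ℓ, t ^ α * (deriv u t)^2) ≤ I := by
      rw [intervalIntegral.integral_of_le hxℓ.le, integral_Ioc_eq_integral_Ioo]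
      refine setIntegral_mono_set hW ?_ ?_
      · refine (ae_restrict_iff' measurableSet_Ioo).2 (MeasureTheory.ae_of_all _ fun t ht => ?_)
        exact mul_nonneg (Real.rpow_nonneg ht.1.le α) (sq_nonneg _)
      · exact HasSubset.Subset.eventuallyLE (Set.Ioo_subset_Ioo hx0.le le_rfl)
    -- AM–GM bound on J
    have hJle : ∀ s : ℝ, 0 < s → J ≤ (s * A + s⁻¹ * I) / 2 := by
      intro s hs
      have hptw : ∀ t ∈ Set.Ioc x ℓ,
          |deriv u t| ≤ (s * t ^ (-α) + s⁻¹ * (t ^ α * (deriv u t)^2)) / 2 := by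
        intro t ht
        have ht0 : 0 < t := hx0.trans ht.1
        have hw : (0:ℝ) < t ^ α := Real.rpow_pos_of_pos ht0 α
        set w : ℝ := t ^ α
        set b : ℝ := |deriv u t|
        have hb2 : b ^ 2 = (deriv u t)^2 := sq_abs _
        have hneg : t ^ (-α) = w⁻¹ := Real.rpow_neg ht0.le α
        rw [hneg, ← hb2]
        have hkey : 2 * (s * (w * b)) ≤ s ^ 2 + (w * b) ^ 2 := by
          nlinarith [two_mul_le_add_sq s (w*b)]
        have heq : (s * w⁻¹ + s⁻¹ * (w * b ^ 2)) / 2 = (s ^ 2 + (w * b) ^ 2) / (2 * (s * w)) := by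
          field_simp
        rw [heq, le_div_iff₀ (by positivity)]
        nlinarith
      have hintJ : J ≤ ∫ t in x..ℓ, (s * t ^ (-α) + s⁻¹ * (t ^ α * (deriv u t)^2)) / 2 := by
        rw [hJdef, intervalIntegral.integral_of_le hxℓ.le, intervalIntegral.integral_of_le hxℓ.le]
        refine setIntegral_mono_on ?_ ?_ measurableSet_Ioc hptw
        · exact (intervalIntegrable_iff_integrableOn_Ioc_of_le hxℓ.le).1 hD.abs
        · exact (((((intervalIntegrable_iff_integrableOn_Ioc_of_le hxℓ.le).1 hR1).const_mul
            s).add (hWx.const_mul s⁻¹)).div_const 2)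
      have hsplit : ∫ t in x..ℓ, (s * t ^ (-α) + s⁻¹ * (t ^ α * (deriv u t)^2)) / 2
          = (s * ∫ t in x..ℓ, t ^ (-α)) / 2
            + (s⁻¹ * ∫ t in x..ℓ, t ^ α * (deriv u t)^2) / 2 := by
        have hWxi : IntervalIntegrable (fun t => t ^ α * (deriv u t)^2) volume x ℓ :=
          (intervalIntegrable_iff_integrableOn_Ioc_of_le hxℓ.le).2 hWx
        rw [intervalIntegral.integral_div, intervalIntegral.integral_add
          (hR1.const_mul s) (hWxi.const_mul s⁻¹),
          intervalIntegral.integral_const_mul, intervalIntegral.integral_const_mul]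
        ring
      have hs' : (0:ℝ) ≤ s⁻¹ := inv_nonneg.mpr hs.le
      have hb1 : s * (∫ t in x..ℓ, t ^ (-α)) ≤ s * A := mul_le_mul_of_nonneg_left hK1 hs.le
      have hb2 : s⁻¹ * (∫ t in x..ℓ, t ^ α * (deriv u t)^2) ≤ s⁻¹ * I :=
        mul_le_mul_of_nonneg_left hK2 hs'
      rw [hsplit] at hintJ
      clear_value J I A ε'
      linarith
    -- optimize over s to obtain J² ≤ A * I
    have hJ2 : J ^ 2 ≤ A * I := by
      refine le_of_forall_pos_le_add fun δ hδ => ?_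
      set s : ℝ := Real.sqrt ((I + δ / A) / A) with hsdef
      have hspos : 0 < s := Real.sqrt_pos.mpr (by positivity)
      have hs2 : s ^ 2 = (I + δ / A) / A := Real.sq_sqrt (by positivity)
      have hIδ : I + δ / A = s ^ 2 * A := by
        rw [hs2, div_mul_cancel₀ _ (ne_of_gt hA)]
      have hsA : s⁻¹ * (I + δ / A) = s * A := by
        rw [hIδ, show s⁻¹ * (s ^ 2 * A) = (s⁻¹ * s) * (s * A) by ring,
          inv_mul_cancel₀ (ne_of_gt hspos), one_mul]
      have hJs : J ≤ s * A := by
        have h1 := hJle s hspos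
        have h2 : s⁻¹ * I ≤ s⁻¹ * (I + δ / A) :=
          mul_le_mul_of_nonneg_left (le_add_of_nonneg_right (by positivity))
            (inv_nonneg.mpr hspos.le)
        have h3 : (0:ℝ) ≤ s⁻¹ * (δ / A) := by positivity
        clear_value I A ε'
        linarith
      have hfin : (s * A) ^ 2 = A * I + δ := by
        have : (s * A) ^ 2 = (s ^ 2 * A) * A := by ring
        rw [this, ← hIδ, add_mul, div_mul_cancel₀ _ (ne_of_gt hA), mul_comm I A]
      calc J ^ 2 ≤ (s * A) ^ 2 := by nlinarith [mul_pos hspos hA]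
        _ = A * I + δ := hfin
    calc (u x)^2 = |u x| ^ 2 := (sq_abs _).symm
      _ ≤ J ^ 2 := by nlinarith [abs_nonneg (u x)]
      _ ≤ A * I := hJ2
  -- integrate the pointwise bound
  have hint : IntegrableOn (fun x : ℝ => (2 * x ^ (ε'-1) + ℓ) * I) (Set.Ioo 0 ℓ) := by
    have h1 : IntervalIntegrable (fun x : ℝ => x ^ (ε'-1)) volume 0 ℓ :=
      intervalIntegral.intervalIntegrable_rpow' (by linarith)
    have h2 : IntegrableOn (fun x : ℝ => x ^ (ε'-1)) (Set.Ioo 0 ℓ) :=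
      ((intervalIntegrable_iff_integrableOn_Ioc_of_le hℓ.le).1 h1).mono_set Set.Ioo_subset_Ioc_self
    exact (((h2.const_mul 2).add (integrable_const ℓ)).mul_const I)
  have hstep : ∫ x in Set.Ioo (0:ℝ) ℓ, (u x)^2
      ≤ ∫ x in Set.Ioo (0:ℝ) ℓ, (2 * x ^ (ε'-1) + ℓ) * I :=
    setIntegral_mono_on hu2 hint measurableSet_Ioo key
  have hval : ∫ x in Set.Ioo (0:ℝ) ℓ, (2 * x ^ (ε'-1) + ℓ) * I
      = (2 * ℓ ^ ε' / ε' + ℓ ^ 2) * I := by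
    rw [integral_mul_const]
    congr 1
    have h1 : IntervalIntegrable (fun x : ℝ => x ^ (ε'-1)) volume 0 ℓ :=
      intervalIntegral.intervalIntegrable_rpow' (by linarith)
    rw [← integral_Ioc_eq_integral_Ioo, ← intervalIntegral.integral_of_le hℓ.le,
      intervalIntegral.integral_add (h1.const_mul 2) intervalIntegrable_const,
      intervalIntegral.integral_const_mul, integral_rpow (Or.inl (by linarith))]
    rw [show ε' - 1 + 1 = ε' by ring, Real.zero_rpow (ne_of_gt hε'0)]
    simp
    ring
  calc ∫ x in Set.Ioo (0:ℝ) ℓ, (u x)^2 ≤ _ := hstep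
    _ = (2 * ℓ ^ ε' / ε' + ℓ ^ 2) * I := hval
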